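/- arXiv:1811.10077 — 2 statements merged into one kernel-verified Lean document; each statement's English description precedes it below -/
import Mathlib

section
/- Let g, y be square-integrable random vectors and g̃ = E[g|y]. Then the infimum over all measurable functions f : ℂ^L → ℂ^K whose range has cardinality at most M of E[‖g − f(y)‖²] equals E[‖g − g̃‖²] plus the infimum over the same class of functions of E[‖g̃ − f(y)‖²]. That is, the optimal M-level quantizer for the task of estimating g from y is obtained by optimally quantizing the MMSE estimate g̃. -/
open MeasureTheory

section Aux

variable {Ω : Type*} {m m0 : MeasurableSpace Ω} {μ : Measure Ω}

/-- conditional expectation of an L² real function is L². -/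
lemma memℒp_two_condexp (hm : m ≤ m0) [IsFiniteMeasure μ] {u : Ω → ℝ}
    (hu : MemLp u 2 μ) : MemLp (μ[u|m]) 2 μ := by
  haveI : SigmaFinite (μ.trim hm) := inferInstance
  have h : (fun ω => (condExpL2 ℝ ℝ hm (hu.toLp u) : Lp ℝ 2 μ) ω) =ᵐ[μ] μ[u|m] := by
    refine ae_eq_condExp_of_forall_setIntegral_eq hm (hu.integrable one_le_two)
      (fun s _ _ => (integrable_condExpL2_of_isFiniteMeasure hm).integrableOn)
      (fun s hs hμs => ?_) (aestronglyMeasurable_condExpL2 hm _)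
    rw [integral_condExpL2_eq hm (hu.toLp u) hs hμs.ne]
    exact setIntegral_congr_ae (hm s hs) ((hu.coeFn_toLp).mono fun x hx _ => hx)
  exact (Lp.memLp _).ae_eq h

lemma integrable_mul_of_memℒp_two {u v : Ω → ℝ} (hu : MemLp u 2 μ) (hv : MemLp v 2 μ) :
    Integrable (fun ω => u ω * v ω) μ := by
  have h := L2.integrable_inner (𝕜 := ℝ) (hu.toLp u) (hv.toLp v)
  refine h.congr ?_
  filter_upwards [hu.coeFn_toLp, hv.coeFn_toLp] with ω h1 h2
  simp [h1, h2, RCLike.inner_apply, mul_comm]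

lemma cross_zero (hm : m ≤ m0) [IsFiniteMeasure μ] {w z : Ω → ℝ}
    (hw2 : MemLp w 2 μ) (hz2 : MemLp z 2 μ) (hz_sm : StronglyMeasurable[m] z)
    (hw0 : μ[w|m] =ᵐ[μ] 0) : ∫ ω, z ω * w ω ∂μ = 0 := by
  haveI : SigmaFinite (μ.trim hm) := inferInstance
  have izw : Integrable (z * w) μ := integrable_mul_of_memℒp_two hz2 hw2
  have iw : Integrable w μ := hw2.integrable one_le_two
  have h1 : μ[z * w|m] =ᵐ[μ] z * μ[w|m] := condExp_mul_of_stronglyMeasurable_left hz_sm izw iw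
  have h2 : μ[z * w|m] =ᵐ[μ] 0 := by
    filter_upwards [h1, hw0] with ω hω h0
    rw [hω]; simp [h0]
  calc ∫ ω, z ω * w ω ∂μ = ∫ ω, (μ[z * w|m]) ω ∂μ := (integral_condExp hm).symm
    _ = 0 := by rw [integral_eq_zero_of_ae h2]

lemma scalar_decomp [IsFiniteMeasure μ] {a b c : Ω → ℝ}
    (ha : MemLp a 2 μ) (hb : MemLp b 2 μ) (hc : MemLp c 2 μ)
    (hcross : ∫ ω, (b ω - c ω) * (a ω - b ω) ∂μ = 0) :
    ∫ ω, (a ω - c ω) ^ 2 ∂μ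
      = ∫ ω, (a ω - b ω) ^ 2 ∂μ + ∫ ω, (b ω - c ω) ^ 2 ∂μ := by
  have i1 : Integrable (fun ω => (a ω - b ω) ^ 2) μ := (ha.sub hb).integrable_sq
  have i2 : Integrable (fun ω => (b ω - c ω) ^ 2) μ := (hb.sub hc).integrable_sq
  have i3 : Integrable (fun ω => (b ω - c ω) * (a ω - b ω)) μ :=
    integrable_mul_of_memℒp_two (hb.sub hc) (ha.sub hb)
  have hpt : ∀ ω, (a ω - c ω) ^ 2
      = (a ω - b ω) ^ 2 + ((b ω - c ω) ^ 2 + 2 * ((b ω - c ω) * (a ω - b ω))) := by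
    intro ω; ring
  have i5 : Integrable (fun ω => 2 * ((b ω - c ω) * (a ω - b ω))) μ := by
    exact i3.const_mul 2
  have i4 : Integrable
      (fun ω => (b ω - c ω) ^ 2 + 2 * ((b ω - c ω) * (a ω - b ω))) μ := by
    exact i2.add i5
  simp_rw [hpt]
  rw [integral_add i1 i4, integral_add i2 i5, MeasureTheory.integral_const_mul, hcross]
  ring

end Aux

/-- Optimal task-based quantization reduces to quantizing the MMSE estimate:
for square-integrable random vectors `g : Ω → ℂ^K`, `y : Ω → ℂ^L` with
`g̃ = E[g | y]`, the infimum over all measurable functions `f : ℂ^L → ℂ^K` whose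
range has cardinality at most `M` of `E[‖g − f(y)‖²]` equals `E[‖g − g̃‖²]` plus
the infimum over the same class of `E[‖g̃ − f(y)‖²]`. -/
theorem optimal_quantizer_quantizes_mmse_estimate
    {Ω : Type*} [MeasurableSpace Ω] (μ : Measure Ω) [IsProbabilityMeasure μ]
    {K L : ℕ} (M : ℕ)
    (g : Ω → (Fin K → ℂ)) (y : Ω → (Fin L → ℂ))
    (hg : Measurable g) (hy : Measurable y)
    (hg2 : MemLp g 2 μ)
    (gtilde : Ω → (Fin K → ℂ))
    (hgtilde : gtilde = μ[g | MeasurableSpace.comap y inferInstance]) :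
    (⨅ f ∈ {f : (Fin L → ℂ) → (Fin K → ℂ) |
        Measurable f ∧ (Set.range f).Finite ∧ (Set.range f).ncard ≤ M},
        ∫⁻ ω, ENNReal.ofReal (∑ i, ‖g ω i - f (y ω) i‖ ^ 2) ∂μ)
      = (∫⁻ ω, ENNReal.ofReal (∑ i, ‖g ω i - gtilde ω i‖ ^ 2) ∂μ)
        + ⨅ f ∈ {f : (Fin L → ℂ) → (Fin K → ℂ) |
            Measurable f ∧ (Set.range f).Finite ∧ (Set.range f).ncard ≤ M},
            ∫⁻ ω, ENNReal.ofReal (∑ i, ‖gtilde ω i - f (y ω) i‖ ^ 2) ∂μ := by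
  have hm : MeasurableSpace.comap y inferInstance ≤ _ := hy.comap_le
  haveI : SigmaFinite (μ.trim hm) := inferInstance
  have hgint : Integrable g μ := hg2.integrable one_le_two
  have hgt_int : Integrable gtilde μ := hgtilde ▸ integrable_condExp
  have hgt_sm : StronglyMeasurable[MeasurableSpace.comap y inferInstance] gtilde := hgtilde ▸ stronglyMeasurable_condExp
  -- scalar components of the conditional expectation
  have hclaim : ∀ (T : (Fin K → ℂ) →L[ℝ] ℝ),
      (fun ω => T (gtilde ω)) =ᵐ[μ] μ[(fun ω => T (g ω))|MeasurableSpace.comap y inferInstance] := by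
    intro T
    refine ae_eq_condExp_of_forall_setIntegral_eq hm
      ((T.comp_memLp' hg2).integrable one_le_two)
      (fun s _ _ => (T.integrable_comp hgt_int).integrableOn)
      (fun s hs _ => ?_)
      ((T.continuous.comp_stronglyMeasurable hgt_sm).aestronglyMeasurable)
    calc ∫ x in s, T (gtilde x) ∂μ = T (∫ x in s, gtilde x ∂μ) :=
          T.integral_comp_comm hgt_int.integrableOn
      _ = T (∫ x in s, g x ∂μ) := by rw [hgtilde, setIntegral_condExp hm hgint hs]
      _ = ∫ x in s, T (g x) ∂μ := (T.integral_comp_comm hgint.integrableOn).symm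
  have ha2 : ∀ (T : (Fin K → ℂ) →L[ℝ] ℝ), MemLp (fun ω => T (g ω)) 2 μ :=
    fun T => T.comp_memLp' hg2
  have hb2 : ∀ (T : (Fin K → ℂ) →L[ℝ] ℝ), MemLp (fun ω => T (gtilde ω)) 2 μ :=
    fun T => (memℒp_two_condexp hm (ha2 T)).ae_eq (hclaim T).symm
  have hb_sm : ∀ (T : (Fin K → ℂ) →L[ℝ] ℝ), StronglyMeasurable[MeasurableSpace.comap y inferInstance] (fun ω => T (gtilde ω)) :=
    fun T => T.continuous.comp_stronglyMeasurable hgt_sm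
  have hw0 : ∀ (T : (Fin K → ℂ) →L[ℝ] ℝ),
      μ[(fun ω => T (g ω) - T (gtilde ω))|MeasurableSpace.comap y inferInstance] =ᵐ[μ] 0 := by
    intro T
    have h : μ[(fun ω => T (g ω)) - (fun ω => T (gtilde ω))|MeasurableSpace.comap y inferInstance]
        =ᵐ[μ] μ[(fun ω => T (g ω))|MeasurableSpace.comap y inferInstance] - μ[(fun ω => T (gtilde ω))|MeasurableSpace.comap y inferInstance] :=
      condExp_sub ((ha2 T).integrable one_le_two) ((hb2 T).integrable one_le_two) _
    refine h.trans ?_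
    rw [condExp_of_stronglyMeasurable hm (hb_sm T) ((hb2 T).integrable one_le_two)]
    filter_upwards [hclaim T] with ω hω
    simp [Pi.sub_apply, ← hω]
  -- the coordinate projections
  set Tr : Fin K → (Fin K → ℂ) →L[ℝ] ℝ :=
    fun i => Complex.reCLM.comp (ContinuousLinearMap.proj i) with hTr
  set Ti : Fin K → (Fin K → ℂ) →L[ℝ] ℝ :=
    fun i => Complex.imCLM.comp (ContinuousLinearMap.proj i) with hTi
  have hTr_apply : ∀ i (v : Fin K → ℂ), Tr i v = (v i).re := fun i v => rfl
  have hTi_apply : ∀ i (v : Fin K → ℂ), Ti i v = (v i).im := fun i v => rfl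
  have hnorm : ∀ z : ℂ, ‖z‖ ^ 2 = z.re ^ 2 + z.im ^ 2 := by
    intro z
    rw [Complex.sq_norm, Complex.normSq_apply]
    ring
  -- per-quantizer key identity
  have key : ∀ f : (Fin L → ℂ) → (Fin K → ℂ), Measurable f → (Set.range f).Finite →
      (∫⁻ ω, ENNReal.ofReal (∑ i, ‖g ω i - f (y ω) i‖ ^ 2) ∂μ)
        = (∫⁻ ω, ENNReal.ofReal (∑ i, ‖g ω i - gtilde ω i‖ ^ 2) ∂μ)
          + ∫⁻ ω, ENNReal.ofReal (∑ i, ‖gtilde ω i - f (y ω) i‖ ^ 2) ∂μ := by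
    intro f hfm hffin
    obtain ⟨C₀, hC₀⟩ : ∃ C, ∀ x, ‖f x‖ ≤ C := by
      obtain ⟨C, hC⟩ := (hffin.image norm).bddAbove
      exact ⟨C, fun x => hC ⟨f x, ⟨x, rfl⟩, rfl⟩⟩
    have hc2 : ∀ (T : (Fin K → ℂ) →L[ℝ] ℝ), MemLp (fun ω => T (f (y ω))) 2 μ := by
      intro T
      refine MemLp.of_bound
        ((T.continuous.measurable.comp (hfm.comp hy)).aestronglyMeasurable)
        (‖T‖ * C₀) (Filter.Eventually.of_forall fun ω => ?_)
      calc ‖T (f (y ω))‖ ≤ ‖T‖ * ‖f (y ω)‖ := T.le_opNorm _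
        _ ≤ ‖T‖ * C₀ := mul_le_mul_of_nonneg_left (hC₀ _) (norm_nonneg T)
    have hfy_sm : StronglyMeasurable[MeasurableSpace.comap y inferInstance] (fun ω => f (y ω)) := by
      refine Measurable.stronglyMeasurable ?_
      exact Measurable.comp hfm (comap_measurable y)
    have hc_sm : ∀ (T : (Fin K → ℂ) →L[ℝ] ℝ),
        StronglyMeasurable[MeasurableSpace.comap y inferInstance] (fun ω => T (f (y ω))) := fun T =>
      T.continuous.comp_stronglyMeasurable hfy_sm
    have hcross : ∀ (T : (Fin K → ℂ) →L[ℝ] ℝ),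
        ∫ ω, (T (gtilde ω) - T (f (y ω))) * (T (g ω) - T (gtilde ω)) ∂μ = 0 := by
      intro T
      exact cross_zero hm ((ha2 T).sub (hb2 T)) ((hb2 T).sub (hc2 T))
        ((hb_sm T).sub (hc_sm T)) (hw0 T)
    -- per-coordinate real decomposition
    have hdecomp : ∀ (T : (Fin K → ℂ) →L[ℝ] ℝ),
        ∫ ω, (T (g ω) - T (f (y ω))) ^ 2 ∂μ
          = ∫ ω, (T (g ω) - T (gtilde ω)) ^ 2 ∂μ
            + ∫ ω, (T (gtilde ω) - T (f (y ω))) ^ 2 ∂μ := fun T =>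
      scalar_decomp (ha2 T) (hb2 T) (hc2 T) (hcross T)
    -- integrability of the summands
    have isq : ∀ (u v : Ω → (Fin K → ℂ)),
        (∀ T : (Fin K → ℂ) →L[ℝ] ℝ, MemLp (fun ω => T (u ω)) 2 μ) →
        (∀ T : (Fin K → ℂ) →L[ℝ] ℝ, MemLp (fun ω => T (v ω)) 2 μ) →
        ∀ i : Fin K, Integrable (fun ω => ‖u ω i - v ω i‖ ^ 2) μ := by
      intro u v hu hv i
      have h1 : Integrable (fun ω => ((Tr i) (u ω) - (Tr i) (v ω)) ^ 2) μ :=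
        ((hu (Tr i)).sub (hv (Tr i))).integrable_sq
      have h2 : Integrable (fun ω => ((Ti i) (u ω) - (Ti i) (v ω)) ^ 2) μ :=
        ((hu (Ti i)).sub (hv (Ti i))).integrable_sq
      have := h1.add h2
      refine this.congr (Filter.Eventually.of_forall fun ω => ?_)
      simp only [Pi.add_apply, hTr_apply, hTi_apply, Complex.sq_norm,
        Complex.normSq_apply, Complex.sub_re, Complex.sub_im]
      ring
    have iX : Integrable (fun ω => ∑ i, ‖g ω i - f (y ω) i‖ ^ 2) μ :=
      integrable_finset_sum _ fun i _ => isq g (fun ω => f (y ω)) ha2 hc2 i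
    have iA : Integrable (fun ω => ∑ i, ‖g ω i - gtilde ω i‖ ^ 2) μ :=
      integrable_finset_sum _ fun i _ => isq g gtilde ha2 hb2 i
    have iB : Integrable (fun ω => ∑ i, ‖gtilde ω i - f (y ω) i‖ ^ 2) μ :=
      integrable_finset_sum _ fun i _ => isq gtilde (fun ω => f (y ω)) hb2 hc2 i
    -- the real-integral identity
    have hsplit : ∀ (u v : Ω → (Fin K → ℂ)),
        (∀ T : (Fin K → ℂ) →L[ℝ] ℝ, MemLp (fun ω => T (u ω)) 2 μ) →
        (∀ T : (Fin K → ℂ) →L[ℝ] ℝ, MemLp (fun ω => T (v ω)) 2 μ) →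
        ∀ i : Fin K, ∫ ω, ‖u ω i - v ω i‖ ^ 2 ∂μ
          = ∫ ω, ((Tr i) (u ω) - (Tr i) (v ω)) ^ 2 ∂μ
            + ∫ ω, ((Ti i) (u ω) - (Ti i) (v ω)) ^ 2 ∂μ := by
      intro u v hu hv i
      have h1 : Integrable (fun ω => ((Tr i) (u ω) - (Tr i) (v ω)) ^ 2) μ :=
        ((hu (Tr i)).sub (hv (Tr i))).integrable_sq
      have h2 : Integrable (fun ω => ((Ti i) (u ω) - (Ti i) (v ω)) ^ 2) μ :=
        ((hu (Ti i)).sub (hv (Ti i))).integrable_sq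
      rw [← integral_add h1 h2]
      refine integral_congr_ae (Filter.Eventually.of_forall fun ω => ?_)
      simp only [hTr_apply, hTi_apply, Complex.sq_norm,
        Complex.normSq_apply, Complex.sub_re, Complex.sub_im]
      ring
    have hXint : ∫ ω, ∑ i, ‖g ω i - f (y ω) i‖ ^ 2 ∂μ
        = (∫ ω, ∑ i, ‖g ω i - gtilde ω i‖ ^ 2 ∂μ)
          + ∫ ω, ∑ i, ‖gtilde ω i - f (y ω) i‖ ^ 2 ∂μ := by
      rw [integral_finset_sum _ fun i _ => isq g (fun ω => f (y ω)) ha2 hc2 i,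
        integral_finset_sum _ fun i _ => isq g gtilde ha2 hb2 i,
        integral_finset_sum _ fun i _ => isq gtilde (fun ω => f (y ω)) hb2 hc2 i,
        ← Finset.sum_add_distrib]
      refine Finset.sum_congr rfl fun i _ => ?_
      rw [hsplit g (fun ω => f (y ω)) ha2 hc2 i, hsplit g gtilde ha2 hb2 i,
        hsplit gtilde (fun ω => f (y ω)) hb2 hc2 i, hdecomp (Tr i), hdecomp (Ti i)]
      ring
    -- convert to lintegrals
    have nnX : 0 ≤ᵐ[μ] fun ω => ∑ i, ‖g ω i - f (y ω) i‖ ^ 2 :=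
      Filter.Eventually.of_forall fun ω => Finset.sum_nonneg fun i _ => by positivity
    have nnA : 0 ≤ᵐ[μ] fun ω => ∑ i, ‖g ω i - gtilde ω i‖ ^ 2 :=
      Filter.Eventually.of_forall fun ω => Finset.sum_nonneg fun i _ => by positivity
    have nnB : 0 ≤ᵐ[μ] fun ω => ∑ i, ‖gtilde ω i - f (y ω) i‖ ^ 2 :=
      Filter.Eventually.of_forall fun ω => Finset.sum_nonneg fun i _ => by positivity
    rw [← ofReal_integral_eq_lintegral_ofReal iX nnX,
      ← ofReal_integral_eq_lintegral_ofReal iA nnA,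
      ← ofReal_integral_eq_lintegral_ofReal iB nnB, hXint,
      ENNReal.ofReal_add (integral_nonneg fun ω => Finset.sum_nonneg fun i _ => by positivity)
        (integral_nonneg fun ω => Finset.sum_nonneg fun i _ => by positivity)]
  -- assemble
  calc (⨅ f ∈ {f : (Fin L → ℂ) → (Fin K → ℂ) |
        Measurable f ∧ (Set.range f).Finite ∧ (Set.range f).ncard ≤ M},
        ∫⁻ ω, ENNReal.ofReal (∑ i, ‖g ω i - f (y ω) i‖ ^ 2) ∂μ)
      = ⨅ f ∈ {f : (Fin L → ℂ) → (Fin K → ℂ) |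
          Measurable f ∧ (Set.range f).Finite ∧ (Set.range f).ncard ≤ M},
          ((∫⁻ ω, ENNReal.ofReal (∑ i, ‖g ω i - gtilde ω i‖ ^ 2) ∂μ)
            + ∫⁻ ω, ENNReal.ofReal (∑ i, ‖gtilde ω i - f (y ω) i‖ ^ 2) ∂μ) := by
        refine iInf_congr fun f => iInf_congr fun hf => key f hf.1 hf.2.1
    _ = _ := by simp_rw [ENNReal.add_iInf]
end

section
/- Under the setting of the previous pilot model (S·Sᴴ = τ·I_K, Σ_y = Σ_m Sᵀ D_m² S* + σ²I_τ, B_{u,u} = τ(D_1)_{u,u}²/(σ² + τΣ_m(D_m)_{u,u}²)), define Γ = τ^{-1}·B·S* ∈ ℂ^{K×τ}. Then Γ·Σ_y·Γᴴ = Φ², where Φ ∈ ℝ^{K×K} is diagonal with Φ_{u,u}² = B_{u,u}·(D_1)_{u,u}². -/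
/-- Covariance of the per-antenna LMMSE channel estimate (Lemma 4.1): in the pilot
model with `S·Sᴴ = τ·I_K`, `Σ_y = Σ_m Sᵀ D_m² S* + σ²·I_τ`,
`b_u = τ·d_{0,u}²/(σ² + τ·Σ_m d_{m,u}²)` and `Γ = τ⁻¹·B·S*`, one has
`Γ·Σ_y·Γᴴ = Φ²` where `Φ` is diagonal with `Φ_{u,u}² = b_u·d_{0,u}²`. -/
theorem pilot_lmmse_covariance
    {K τ N : ℕ} (hKτ : K ≤ τ)
    (S : Matrix (Fin K) (Fin τ) ℂ)
    (hS : S * S.conjTranspose = (τ : ℂ) • (1 : Matrix (Fin K) (Fin K) ℂ))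
    (d : Fin (N + 1) → Fin K → ℝ) (hd : ∀ m u, 0 ≤ d m u)
    (σ2 : ℝ) (hσ : 0 < σ2)
    (Sy : Matrix (Fin τ) (Fin τ) ℂ)
    (hSy : Sy = (∑ m, S.transpose * Matrix.diagonal (fun u => ((d m u : ℂ)) ^ 2)
                  * S.map (starRingEnd ℂ))
              + (σ2 : ℂ) • (1 : Matrix (Fin τ) (Fin τ) ℂ))
    (b : Fin K → ℝ)
    (hb : ∀ u, b u = τ * (d 0 u) ^ 2 / (σ2 + τ * ∑ m, (d m u) ^ 2))
    (Γ : Matrix (Fin K) (Fin τ) ℂ)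
    (hΓ : Γ = (τ : ℂ)⁻¹ • (Matrix.diagonal (fun u => (b u : ℂ))
                * S.map (starRingEnd ℂ))) :
    Γ * Sy * Γ.conjTranspose
      = Matrix.diagonal (fun u => ((b u : ℂ)) * ((d 0 u : ℂ)) ^ 2) := by
  subst hSy hΓ
  set C := S.map (starRingEnd ℂ) with hCdef
  set B := Matrix.diagonal (fun u => (b u : ℂ)) with hBdef
  have hmap : S.map (⇑(starRingEnd ℂ) ∘ ⇑(starRingEnd ℂ)) = S := by ext i j; simp
  have hC : C * S.transpose = (τ : ℂ) • 1 := by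
    have := congrArg (Matrix.map · (starRingEnd ℂ)) hS
    simpa [hCdef, Matrix.map_mul, Matrix.conjTranspose, Matrix.map_smul,
      Matrix.transpose_map, hmap] using this
  have hCt : C.conjTranspose = S.transpose := by
    simp [hCdef, Matrix.conjTranspose, Matrix.transpose_map, Matrix.map_map, hmap]
  have hBt : B.conjTranspose = B := by
    simp [hBdef, Matrix.diagonal_conjTranspose]
  have key : C * ((∑ m, S.transpose * Matrix.diagonal (fun u => ((d m u : ℂ)) ^ 2) * C)
      + (σ2 : ℂ) • 1) * S.transpose
      = ((τ:ℂ)*τ) • (∑ m, Matrix.diagonal (fun u => ((d m u : ℂ)) ^ 2))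
        + ((σ2:ℂ)*τ) • 1 := by
    simp only [Matrix.mul_add, Matrix.add_mul, Matrix.mul_sum, Matrix.sum_mul,
      Matrix.mul_smul, Matrix.smul_mul, Matrix.mul_one, Matrix.one_mul,
      ← Matrix.mul_assoc, hC]
    simp only [Matrix.mul_assoc, hC, Matrix.mul_smul, Matrix.mul_one, smul_smul,
      Finset.smul_sum]
  have hBCt : (B * C).conjTranspose = S.transpose * B := by
    rw [Matrix.conjTranspose_mul, hCt, hBt]
  rw [Matrix.conjTranspose_smul, hBCt]
  have hstar : star ((τ:ℂ)⁻¹) = (τ:ℂ)⁻¹ := by simp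
  rw [hstar, Matrix.smul_mul, Matrix.smul_mul, Matrix.mul_smul, smul_smul]
  have hassoc : B * C * ((∑ m, S.transpose * Matrix.diagonal (fun u => ((d m u : ℂ)) ^ 2) * C)
      + (σ2 : ℂ) • 1) * (S.transpose * B)
      = B * (C * ((∑ m, S.transpose * Matrix.diagonal (fun u => ((d m u : ℂ)) ^ 2) * C)
      + (σ2 : ℂ) • 1) * S.transpose) * B := by
    simp only [Matrix.mul_assoc]
  rw [hassoc, key]
  have hdiag : B * (((τ:ℂ)*τ) • (∑ m, Matrix.diagonal (fun u => ((d m u : ℂ)) ^ 2))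
      + ((σ2:ℂ)*τ) • 1) * B
      = Matrix.diagonal (fun u => (b u : ℂ) * (((τ:ℂ)*τ) * (∑ m, ((d m u : ℂ)) ^ 2)
          + (σ2:ℂ)*τ) * (b u : ℂ)) := by
    ext i j
    simp only [hBdef, Matrix.diagonal_mul, Matrix.mul_diagonal, Matrix.add_apply,
      Matrix.smul_apply, Matrix.sum_apply, Matrix.diagonal_apply, Matrix.one_apply,
      smul_eq_mul]
    by_cases hij : i = j
    · subst hij; simp [Finset.mul_sum]
    · simp [hij]
  rw [hdiag, ← Matrix.diagonal_smul]
  refine congrArg Matrix.diagonal (funext fun u => ?_)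
  have hA : (0:ℝ) < σ2 + τ * ∑ m, (d m u)^2 := by positivity
  have key2 : ((τ:ℝ)⁻¹ * (τ:ℝ)⁻¹) * (b u * ((τ*τ) * (∑ m, (d m u)^2) + σ2*τ) * b u)
      = b u * (d 0 u)^2 := by
    rcases Nat.eq_zero_or_pos τ with hτ | hτ
    · simp [hb u, hτ]
    · have hτ' : ((τ:ℕ):ℝ) ≠ 0 := by positivity
      rw [hb u]
      field_simp
      ring
  simp only [Pi.smul_apply, smul_eq_mul]
  have key3 := congrArg (fun x : ℝ => (x : ℂ)) key2
  push_cast at key3 ⊢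
  linear_combination key3
end
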